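/- Let (S,K,I) be a split graph and let u,v be two distinct vertices of the independent set I. Then the number of induced P4's of S containing both u and v equals (deg_S(u) − η)·(deg_S(v) − η), where η = |N_S(u) ∩ N_S(v)|. Equivalently, σ_{uv}(S) = |N_S(u) \ N_S(v)| · |N_S(v) \ N_S(u)|. -/

import Mathlib

open SimpleGraph Finset

/-- `T` is a 4-element vertex subset of `S` whose induced subgraph is a path on 4 vertices. -/
def IsInducedP4 {V : Type*} (S : SimpleGraph V) (T : Finset V) : Prop :=
  T.card = 4 ∧ Nonempty (S.induce (T : Set V) ≃g pathGraph 4)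

/-- `σ_{uv}(S)`: the number of induced `P4`'s of `S` containing both `u` and `v`. -/
noncomputable def sigmaP4 {V : Type*} (S : SimpleGraph V) (u v : V) : ℕ :=
  Nat.card {T : Finset V // IsInducedP4 S T ∧ u ∈ T ∧ v ∈ T}

lemma isInducedP4_of' {V : Type*} [DecidableEq V] (S : SimpleGraph V) (a b c d : V)
    (hab : S.Adj a b) (hbc : S.Adj b c) (hcd : S.Adj c d)
    (hac : ¬ S.Adj a c) (had : ¬ S.Adj a d) (hbd : ¬ S.Adj b d)
    (hac' : a ≠ c) (had' : a ≠ d) (hbd' : b ≠ d) :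
    IsInducedP4 S ({a,b,c,d} : Finset V) := by
  have hab' : a ≠ b := hab.ne
  have hbc' : b ≠ c := hbc.ne
  have hcd' : c ≠ d := hcd.ne
  refine ⟨?_, ?_⟩
  · rw [Finset.card_insert_of_notMem (by simp [hab', hac', had']),
      Finset.card_insert_of_notMem (by simp [hbc', hbd']),
      Finset.card_insert_of_notMem (by simp [hcd'])]
    simp
  · set T : Finset V := {a,b,c,d} with hT
    have ha : (a : V) ∈ (T : Set V) := by simp [hT]
    have hb : (b : V) ∈ (T : Set V) := by simp [hT]
    have hc : (c : V) ∈ (T : Set V) := by simp [hT]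
    have hd : (d : V) ∈ (T : Set V) := by simp [hT]
    let f : Fin 4 → (T : Set V) := ![⟨a, ha⟩, ⟨b, hb⟩, ⟨c, hc⟩, ⟨d, hd⟩]
    have hfinj : Function.Injective f := by
      intro i j hij
      fin_cases i <;> fin_cases j <;>
        simp_all [f, hab', hbc', hcd', hac', had', hbd', hab'.symm, hbc'.symm, hcd'.symm,
          hac'.symm, had'.symm, hbd'.symm, Subtype.ext_iff]
    have hfsurj : Function.Surjective f := by
      rintro ⟨x, hx⟩
      simp only [hT, Finset.coe_insert, Set.mem_insert_iff, Finset.coe_singleton,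
        Set.mem_singleton_iff] at hx
      rcases hx with rfl | rfl | rfl | rfl
      exacts [⟨0, rfl⟩, ⟨1, rfl⟩, ⟨2, rfl⟩, ⟨3, rfl⟩]
    let e : Fin 4 ≃ (T : Set V) := Equiv.ofBijective f ⟨hfinj, hfsurj⟩
    refine ⟨(RelIso.mk e ?_).symm⟩
    intro i j
    have hba : S.Adj b a := hab.symm
    have hcb : S.Adj c b := hbc.symm
    have hdc : S.Adj d c := hcd.symm
    have hca : ¬ S.Adj c a := fun h => hac h.symm
    have hda : ¬ S.Adj d a := fun h => had h.symm
    have hdb : ¬ S.Adj d b := fun h => hbd h.symm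
    show (S.induce (T : Set V)).Adj (f i) (f j) ↔ (pathGraph 4).Adj i j
    fin_cases i <;> fin_cases j <;>
      simp only [f, comap_adj, Function.Embedding.coe_subtype, Matrix.cons_val_zero,
        Matrix.cons_val_one, Matrix.head_cons, Matrix.cons_val_two, Matrix.tail_cons,
        Matrix.cons_val_three, Matrix.head_fin_const, pathGraph_adj] <;>
      simp_all [Fin.ext_iff]

set_option maxHeartbeats 2000000 in
theorem stmt0 {V : Type*} [Fintype V] [DecidableEq V] [Nonempty V]
    (S : SimpleGraph V) [DecidableRel S.Adj] (K I : Finset V)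
    (hpart : K ∪ I = Finset.univ) (hdisj : Disjoint K I)
    (hK : S.IsClique (K : Set V)) (hI : Sᶜ.IsClique (I : Set V))
    (u v : V) (hu : u ∈ I) (hv : v ∈ I) (huv : u ≠ v) :
    sigmaP4 S u v =
      (S.degree u - (S.neighborFinset u ∩ S.neighborFinset v).card) *
        (S.degree v - (S.neighborFinset u ∩ S.neighborFinset v).card) ∧
    sigmaP4 S u v =
      (S.neighborFinset u \ S.neighborFinset v).card *
        (S.neighborFinset v \ S.neighborFinset u).card := by
  classical
  -- basic structure facts
  have hnadj : ∀ x ∈ I, ∀ y ∈ I, ¬ S.Adj x y := by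
    intro x hx y hy hadj
    rcases eq_or_ne x y with rfl | hne
    · exact S.irrefl hadj
    · exact (hI (by simpa using hx) (by simpa using hy) hne).2 hadj
  have hNK : ∀ x ∈ I, ∀ a, S.Adj x a → a ∈ K := by
    intro x hx a hadj
    have : a ∈ K ∪ I := hpart ▸ Finset.mem_univ a
    rcases Finset.mem_union.mp this with h | h
    · exact h
    · exact absurd hadj (hnadj x hx a h)
  set A : Finset V := S.neighborFinset u \ S.neighborFinset v with hA
  set B : Finset V := S.neighborFinset v \ S.neighborFinset u with hB
  -- characterization
  have hchar : ∀ T : Finset V, (IsInducedP4 S T ∧ u ∈ T ∧ v ∈ T) ↔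
      ∃ a b, a ∈ A ∧ b ∈ B ∧ T = {u, v, a, b} := by
    intro T
    constructor
    · rintro ⟨⟨hcard, ⟨e⟩⟩, huT, hvT⟩
      set f : Fin 4 → V := fun i => ((e.symm i : (T : Set V)) : V) with hf
      have hfT : ∀ i, f i ∈ T := fun i => (e.symm i).2
      have hfinj : Function.Injective f := fun i j h =>
        e.symm.toEquiv.injective (Subtype.ext h)
      have hadj : ∀ i j, S.Adj (f i) (f j) ↔ (pathGraph 4).Adj i j := by
        intro i j
        exact (e.symm.map_adj_iff (v := i) (w := j))
      have hTeq : T = {f 0, f 1, f 2, f 3} := by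
        apply (Finset.eq_of_subset_of_card_le ?_ ?_).symm
        · intro x hx
          simp only [Finset.mem_insert, Finset.mem_singleton] at hx
          rcases hx with rfl|rfl|rfl|rfl <;> exact hfT _
        · rw [hcard]
          rw [Finset.card_insert_of_notMem (by
              simp only [Finset.mem_insert, Finset.mem_singleton]
              push_neg
              exact ⟨fun h => by exact absurd (hfinj h) (by decide),
                fun h => by exact absurd (hfinj h) (by decide),
                fun h => by exact absurd (hfinj h) (by decide)⟩),
            Finset.card_insert_of_notMem (by
              simp only [Finset.mem_insert, Finset.mem_singleton]
              push_neg
              exact ⟨fun h => by exact absurd (hfinj h) (by decide),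
                fun h => by exact absurd (hfinj h) (by decide)⟩),
            Finset.card_insert_of_notMem (by
              simp only [Finset.mem_singleton]
              exact fun h => by exact absurd (hfinj h) (by decide))]
          simp
      have hmemf : ∀ x ∈ T, ∃ i, f i = x := by
        intro x hx
        rw [hTeq] at hx
        simp only [Finset.mem_insert, Finset.mem_singleton] at hx
        rcases hx with rfl|rfl|rfl|rfl
        exacts [⟨0, rfl⟩, ⟨1, rfl⟩, ⟨2, rfl⟩, ⟨3, rfl⟩]
      obtain ⟨i, hi⟩ := hmemf u huT
      obtain ⟨j, hj⟩ := hmemf v hvT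
      have hij : i ≠ j := fun h => huv (hi ▸ hj ▸ h ▸ rfl)
      have hnadjuv : ¬ (pathGraph 4).Adj i j := by
        rw [← hadj, hi, hj]; exact hnadj u hu v hv
      -- f k's adjacent to u or v are in K
      have hfK : ∀ k, S.Adj u (f k) → f k ∈ K := fun k h => hNK u hu _ h
      have hfK' : ∀ k, S.Adj v (f k) → f k ∈ K := fun k h => hNK v hv _ h
      have key : ∀ p q r s : Fin 4,
          (pathGraph 4).Adj p q → (pathGraph 4).Adj r s → ¬ (pathGraph 4).Adj q s →
          q ≠ s → f p = u → f r = v → False := by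
        intro p q r s h1 h2 h3 h4 hp hr
        have hq : f q ∈ K := hfK q (by rw [← hp, hadj]; exact h1)
        have hs : f s ∈ K := hfK' s (by rw [← hr, hadj]; exact h2)
        have : S.Adj (f q) (f s) := hK (by simpa using hq) (by simpa using hs)
          (fun h => h4 (hfinj h))
        rw [hadj] at this
        exact h3 this
      -- main case analysis
      have hmain : ∃ a b, a ∈ A ∧ b ∈ B ∧ T = {u, v, a, b} := by
        have build : ∀ p q r s : Fin 4, f p = u → f s = v →
            (pathGraph 4).Adj p q → (pathGraph 4).Adj r s →
            ¬ (pathGraph 4).Adj p r → ¬ (pathGraph 4).Adj p s →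
            ¬ (pathGraph 4).Adj q s →
            ({p, q, r, s} : Finset (Fin 4)) = Finset.univ →
            ∃ a b, a ∈ A ∧ b ∈ B ∧ T = {u, v, a, b} := by
          intro p q r s hp hs h1 h2 h3 h4 h5 huniv
          refine ⟨f q, f r, ?_, ?_, ?_⟩
          · rw [hA, Finset.mem_sdiff, mem_neighborFinset, mem_neighborFinset]
            constructor
            · rw [← hp, hadj]; exact h1
            · rw [← hs]
              intro h
              have := (hadj s q).mp h
              exact h5 ((pathGraph 4).adj_symm this)
          · rw [hB, Finset.mem_sdiff, mem_neighborFinset, mem_neighborFinset]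
            constructor
            · rw [← hs, hadj]; exact (pathGraph 4).adj_symm h2
            · rw [← hp]
              intro h
              exact h3 ((hadj p r).mp h)
          · rw [hTeq, ← hp, ← hs]
            ext x
            have : ∀ k : Fin 4, k = p ∨ k = q ∨ k = r ∨ k = s := by
              intro k
              have : k ∈ ({p, q, r, s} : Finset (Fin 4)) := huniv ▸ Finset.mem_univ k
              simpa using this
            constructor
            · intro hx
              simp only [Finset.mem_insert, Finset.mem_singleton] at hx ⊢
              rcases hx with rfl|rfl|rfl|rfl
              · rcases this 0 with h|h|h|h <;> rw [h] <;> tauto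
              · rcases this 1 with h|h|h|h <;> rw [h] <;> tauto
              · rcases this 2 with h|h|h|h <;> rw [h] <;> tauto
              · rcases this 3 with h|h|h|h <;> rw [h] <;> tauto
            · intro hx
              simp only [Finset.mem_insert, Finset.mem_singleton] at hx ⊢
              have hv4 : ∀ k : Fin 4, k = 0 ∨ k = 1 ∨ k = 2 ∨ k = 3 := by decide
              rcases hx with rfl|rfl|rfl|rfl
              · rcases hv4 p with h|h|h|h <;> rw [h] <;> tauto
              · rcases hv4 s with h|h|h|h <;> rw [h] <;> tauto
              · rcases hv4 q with h|h|h|h <;> rw [h] <;> tauto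
              · rcases hv4 r with h|h|h|h <;> rw [h] <;> tauto
        have pd : ∀ i j : Fin 4, ((i:ℕ) + 1 = j ∨ (j:ℕ) + 1 = i) → (pathGraph 4).Adj i j :=
          fun i j h => pathGraph_adj.mpr h
        have pnd : ∀ i j : Fin 4, ¬ ((i:ℕ) + 1 = j ∨ (j:ℕ) + 1 = i) → ¬ (pathGraph 4).Adj i j :=
          fun i j h hc => h (pathGraph_adj.mp hc)
        fin_cases i <;> fin_cases j <;>
          first
          | exact absurd rfl hij
          | exact absurd (pd _ _ (by decide)) hnadjuv
          | exact absurd (key 0 1 2 3 (pd _ _ (by decide)) (pd _ _ (by decide)) (pnd _ _ (by decide)) (by decide) hi hj) not_false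
          | exact absurd (key 2 3 0 1 (pd _ _ (by decide)) (pd _ _ (by decide)) (pnd _ _ (by decide)) (by decide) hi hj) not_false
          | exact absurd (key 1 0 3 2 (pd _ _ (by decide)) (pd _ _ (by decide)) (pnd _ _ (by decide)) (by decide) hi hj) not_false
          | exact absurd (key 3 2 1 0 (pd _ _ (by decide)) (pd _ _ (by decide)) (pnd _ _ (by decide)) (by decide) hi hj) not_false
          | exact build 0 1 2 3 hi hj (pd _ _ (by decide)) (pd _ _ (by decide)) (pnd _ _ (by decide)) (pnd _ _ (by decide)) (pnd _ _ (by decide)) (by decide)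
          | exact build 3 2 1 0 hi hj (pd _ _ (by decide)) (pd _ _ (by decide)) (pnd _ _ (by decide)) (pnd _ _ (by decide)) (pnd _ _ (by decide)) (by decide)
      exact hmain
    · rintro ⟨a, b, ha, hb, rfl⟩
      rw [hA, Finset.mem_sdiff, mem_neighborFinset, mem_neighborFinset] at ha
      rw [hB, Finset.mem_sdiff, mem_neighborFinset, mem_neighborFinset] at hb
      obtain ⟨hua, hva⟩ := ha
      obtain ⟨hvb, hub⟩ := hb
      have haK : a ∈ K := hNK u hu a hua
      have hbK : b ∈ K := hNK v hv b hvb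
      have hne : a ≠ b := fun h => hva (h ▸ hvb)
      have hadjab : S.Adj a b := hK (by simpa using haK) (by simpa using hbK) hne
      have huvn : ¬ S.Adj u v := hnadj u hu v hv
      have huK : u ∉ K := Finset.disjoint_right.mp hdisj hu
      have hvK : v ∉ K := Finset.disjoint_right.mp hdisj hv
      have h1 : IsInducedP4 S ({u, a, b, v} : Finset V) :=
        isInducedP4_of' S u a b v hua hadjab hvb.symm hub huvn
          (fun h => hva h.symm)
          (fun h => huK (h ▸ hbK)) huv (fun h => hvK (h ▸ haK))
      have hTT : ({u, v, a, b} : Finset V) = {u, a, b, v} := by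
        ext x; simp only [Finset.mem_insert, Finset.mem_singleton]; tauto
      rw [hTT]
      exact ⟨h1, by simp, by simp⟩
  -- counting
  have hseteq : {T : Finset V | IsInducedP4 S T ∧ u ∈ T ∧ v ∈ T} =
      ↑((A ×ˢ B).image fun p => ({u, v, p.1, p.2} : Finset V)) := by
    ext T
    simp only [Set.mem_setOf_eq, Finset.coe_image, Set.mem_image, Finset.mem_coe,
      Finset.mem_product]
    rw [hchar T]
    constructor
    · rintro ⟨a, b, ha, hb, rfl⟩
      exact ⟨(a, b), ⟨ha, hb⟩, rfl⟩
    · rintro ⟨⟨a, b⟩, ⟨ha, hb⟩, rfl⟩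
      exact ⟨a, b, ha, hb, rfl⟩
  have hmemA : ∀ a ∈ A, S.Adj u a ∧ ¬ S.Adj v a := by
    intro a ha
    rw [hA, Finset.mem_sdiff, mem_neighborFinset, mem_neighborFinset] at ha
    exact ha
  have hmemB : ∀ b ∈ B, S.Adj v b ∧ ¬ S.Adj u b := by
    intro b hb
    rw [hB, Finset.mem_sdiff, mem_neighborFinset, mem_neighborFinset] at hb
    exact hb
  have hinj : Set.InjOn (fun p : V × V => ({u, v, p.1, p.2} : Finset V)) ↑(A ×ˢ B) := by
    rintro ⟨a, b⟩ hab ⟨a', b'⟩ hab' heq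
    simp only [Finset.coe_product, Set.mem_prod, Finset.mem_coe] at hab hab'
    obtain ⟨hua, hva⟩ := hmemA a hab.1
    obtain ⟨hvb, hub⟩ := hmemB b hab.2
    obtain ⟨hua', hva'⟩ := hmemA a' hab'.1
    obtain ⟨hvb', hub'⟩ := hmemB b' hab'.2
    have huvn : ¬ S.Adj u v := hnadj u hu v hv
    simp only at heq
    have haa : a = a' := by
      have : a ∈ ({u, v, a', b'} : Finset V) := by
        rw [← heq]; simp
      simp only [Finset.mem_insert, Finset.mem_singleton] at this
      rcases this with rfl | rfl | rfl | rfl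
      · exact absurd hua (S.irrefl)
      · exact absurd hua huvn
      · rfl
      · exact absurd hub' (fun hc => hc hua)
    have hbb : b = b' := by
      have : b ∈ ({u, v, a', b'} : Finset V) := by
        rw [← heq]; simp
      simp only [Finset.mem_insert, Finset.mem_singleton] at this
      rcases this with rfl | rfl | rfl | rfl
      · exact absurd hvb (fun hc => huvn hc.symm)
      · exact absurd hvb (S.irrefl)
      · exact absurd hva' (fun hc => hc hvb)
      · rfl
    simp [haa, hbb]
  have hcount : sigmaP4 S u v = A.card * B.card := by
    have h1 : sigmaP4 S u v =
        ({T : Finset V | IsInducedP4 S T ∧ u ∈ T ∧ v ∈ T}).ncard :=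
      Nat.card_coe_set_eq _
    rw [h1, hseteq, Set.ncard_coe_finset, Finset.card_image_of_injOn hinj,
      Finset.card_product]
  have hcA : A.card = S.degree u - (S.neighborFinset u ∩ S.neighborFinset v).card := by
    rw [hA, ← Finset.sdiff_inter_self_left,
      Finset.card_sdiff_of_subset Finset.inter_subset_left, SimpleGraph.degree]
  have hcB : B.card = S.degree v - (S.neighborFinset u ∩ S.neighborFinset v).card := by
    rw [hB, ← Finset.sdiff_inter_self_left,
      Finset.card_sdiff_of_subset Finset.inter_subset_left, SimpleGraph.degree,
      Finset.inter_comm]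
  exact ⟨by rw [hcount, hcA, hcB], hcount⟩
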